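/- Suppose b, σ, θ are constant on [0,t] with b ≥ 0, σ > 0, θ > 0, set d = 4θ/σ² and Σ = (1/4)∫_0^t e^{−b(t−v)} σ² dv (so Σ = σ²(1 − e^{−bt})/(4b) when b > 0 and Σ = σ²t/4 when b = 0). Then for every r₀ > 0 and every real ω, exp( iω [ r₀ e^{−bt}/(1 − 2iωΣ) + ∫_0^t e^{−b(t−s)} θ / (1 − 2iω (1/4)∫_s^t e^{−b(t−v)}σ² dv) ds ] ) = exp( iω r₀ e^{−bt}/(1 − 2iωΣ) ) · (1 − 2iωΣ)^{−d/2}, i.e. the characteristic function formula of Theorem 2 reduces to the characteristic function of the scaled non-central chi-squared distribution χ²(d, r₀ e^{−bt}/Σ, √Σ) with d degrees of freedom (complex powers taken with the principal branch). -/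

import Mathlib

open intervalIntegral

theorem cir_charFun_const_params (t r₀ b σ θ d S : ℝ)
    (ht : 0 < t) (hr₀ : 0 < r₀) (hb : 0 ≤ b) (hσ : 0 < σ) (hθ : 0 < θ)
    (hd : d = 4 * θ / σ ^ 2)
    (hS : S = (1 / 4) * ∫ v in (0 : ℝ)..t, Real.exp (-b * (t - v)) * σ ^ 2) (ω : ℝ) :
    Complex.exp (Complex.I * (ω : ℂ) *
        (((r₀ * Real.exp (-b * t) : ℝ) : ℂ) / (1 - 2 * Complex.I * (ω : ℂ) * (S : ℂ)) +
          ∫ s in (0 : ℝ)..t,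
            ((Real.exp (-b * (t - s)) * θ : ℝ) : ℂ) /
              (1 - 2 * Complex.I * (ω : ℂ) *
                (((1 / 4) * ∫ v in s..t, Real.exp (-b * (t - v)) * σ ^ 2 : ℝ) : ℂ)))) =
      Complex.exp (Complex.I * (ω : ℂ) *
          (((r₀ * Real.exp (-b * t) : ℝ) : ℂ) / (1 - 2 * Complex.I * (ω : ℂ) * (S : ℂ)))) *
        (1 - 2 * Complex.I * (ω : ℂ) * (S : ℂ)) ^ (-(d : ℂ) / 2) := by
  by_cases hω : ω = 0
  · subst hω
    simp [Complex.one_cpow]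
  -- main case
  have hσ2 : (σ : ℝ) ^ 2 ≠ 0 := by positivity
  set f : ℝ → ℝ := fun v => Real.exp (-b * (t - v)) * σ ^ 2 with hf
  have hfc : Continuous f := by fun_prop
  set Sig : ℝ → ℝ := fun s => (1 / 4) * ∫ v in s..t, f v with hSigdef
  have hSig' : ∀ s : ℝ, HasDerivAt Sig (-(1 / 4 * f s)) s := by
    intro s
    have h1 : HasDerivAt (fun u => ∫ v in u..t, f v) (-f s) s :=
      intervalIntegral.integral_hasDerivAt_left (hfc.intervalIntegrable s t)
        (hfc.stronglyMeasurable.stronglyMeasurableAtFilter) hfc.continuousAt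
    have h2 := h1.const_mul (1 / 4 : ℝ)
    simpa only [mul_neg] using h2
  set F : ℝ → ℂ := fun s => 1 - 2 * Complex.I * (ω : ℂ) * ((Sig s : ℝ) : ℂ) with hFdef
  have hFre : ∀ s, (F s).re = 1 := by
    intro s
    simp [hFdef, Complex.sub_re, Complex.mul_re, Complex.mul_im]
  have hFslit : ∀ s, F s ∈ Complex.slitPlane := by
    intro s; exact Or.inl (by rw [hFre s]; norm_num)
  have hFne : ∀ s, F s ≠ 0 := by
    intro s h
    have := hFre s
    rw [h] at this
    simp at this
  have hF' : ∀ s : ℝ, HasDerivAt F (Complex.I * (ω : ℂ) * (1 / 2) * (f s : ℂ)) s := by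
    intro s
    have h1 : HasDerivAt (fun s => ((Sig s : ℝ) : ℂ)) ((-(1 / 4 * f s) : ℝ) : ℂ) s :=
      (hSig' s).ofReal_comp
    have h2 := (h1.const_mul (2 * Complex.I * (ω : ℂ))).const_sub 1
    have : (1 : ℂ) - 2 * Complex.I * (ω : ℂ) * ((-(1 / 4 * f s) : ℝ) : ℂ) - 1
        = Complex.I * (ω : ℂ) * (1 / 2) * (f s : ℂ) := by
      push_cast; ring
    simpa [hFdef] using h2.congr_deriv (by push_cast; ring)
  set K : ℂ := Complex.I * (ω : ℂ) with hKdef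
  have hKne : K ≠ 0 := by
    simp [hKdef, Complex.I_ne_zero, hω, Complex.ofReal_eq_zero]
  set G : ℝ → ℂ := fun s => 2 * (θ : ℂ) / (K * (σ : ℂ) ^ 2) * Complex.log (F s) with hGdef
  have hσ2c : ((σ : ℂ)) ^ 2 ≠ 0 := by
    simp [Complex.ofReal_ne_zero, hσ.ne']
  have hG' : ∀ s : ℝ, HasDerivAt G (((Real.exp (-b * (t - s)) * θ : ℝ) : ℂ) / F s) s := by
    intro s
    have hlog : HasDerivAt (fun s => Complex.log (F s))
        ((Complex.I * (ω : ℂ) * (1 / 2) * (f s : ℂ)) / F s) s :=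
      (hF' s).clog_real (hFslit s)
    have := hlog.const_mul (2 * (θ : ℂ) / (K * (σ : ℂ) ^ 2))
    refine HasDerivAt.congr_deriv (this) ?_
    have hFs := hFne s
    have hωc : ((ω : ℂ)) ≠ 0 := Complex.ofReal_ne_zero.mpr hω
    have hI : Complex.I ≠ 0 := Complex.I_ne_zero
    rw [hKdef, hf]
    have hσc : (σ : ℂ) ≠ 0 := Complex.ofReal_ne_zero.mpr hσ.ne'
    push_cast
    field_simp
  have hFcont : Continuous F := by
    have : ∀ s, ContinuousAt F s := fun s => (hF' s).continuousAt
    exact continuous_iff_continuousAt.mpr this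
  have hIntCont : Continuous fun s => ((Real.exp (-b * (t - s)) * θ : ℝ) : ℂ) / F s := by
    apply Continuous.div _ hFcont hFne
    fun_prop
  have hInt := intervalIntegral.integral_eq_sub_of_hasDerivAt
    (fun s _ => hG' s) (hIntCont.intervalIntegrable 0 t)
  have hFt : F t = 1 := by
    simp [hFdef, hSigdef]
  have hF0 : F 0 = 1 - 2 * Complex.I * (ω : ℂ) * (S : ℂ) := by
    rw [hFdef, hSigdef, hS, hf]
  have hIntVal : (∫ s in (0:ℝ)..t,
      ((Real.exp (-b * (t - s)) * θ : ℝ) : ℂ) /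
        (1 - 2 * Complex.I * (ω : ℂ) *
          (((1 / 4) * ∫ v in s..t, Real.exp (-b * (t - v)) * σ ^ 2 : ℝ) : ℂ)))
      = -(2 * (θ : ℂ) / (K * (σ : ℂ) ^ 2)) *
        Complex.log (1 - 2 * Complex.I * (ω : ℂ) * (S : ℂ)) := by
    have : (∫ s in (0:ℝ)..t,
        ((Real.exp (-b * (t - s)) * θ : ℝ) : ℂ) / F s) = G t - G 0 := hInt
    rw [hFdef, hSigdef, hf] at this
    rw [this]
    simp only [hGdef, hFt, hF0, Complex.log_one]
    ring
  rw [hIntVal]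
  rw [mul_add, Complex.exp_add]
  congr 1
  have hz := hFne 0
  rw [hF0] at hz
  rw [Complex.cpow_def_of_ne_zero hz]
  congr 1
  rw [hd, hKdef]
  have hωc : ((ω : ℂ)) ≠ 0 := Complex.ofReal_ne_zero.mpr hω
  have hI : Complex.I ≠ 0 := Complex.I_ne_zero
  push_cast
  field_simp
  ring
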